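/- Let ω be a radial weight with \hat{ω}(r)>0 for all r<1. If there exist C>0 and β>0 such that \hat{ω}(r) ≤ C·((1-r)/(1-t))^β·\hat{ω}(t) for all 0 ≤ r ≤ t < 1, then there exists C'>0 such that the moments ω_n = ∫_0^1 r^n ω(r) dr satisfy ω_n ≤ C'·ω_{2n} for all n. -/

import Mathlib

open MeasureTheory Set

private lemma aux_exp_rpow {β m : ℝ} (hβ : 0 < β) (hm : 0 < m) :
    Real.exp (-(m/2)) * (2*m) ^ β ≤ (16*β) ^ β * Real.exp (-(m/4)) := by
  have h2m : (0:ℝ) < 2*m := by linarith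
  have h16 : (0:ℝ) < 16*β := by linarith
  rw [Real.rpow_def_of_pos h2m, Real.rpow_def_of_pos h16, ← Real.exp_add, ← Real.exp_add]
  apply Real.exp_le_exp.2
  have h1 : Real.log (2*m) - Real.log (16*β) ≤ (2*m)/(16*β) - 1 := by
    have := Real.log_le_sub_one_of_pos (div_pos h2m h16)
    rwa [Real.log_div h2m.ne' h16.ne'] at this
  have h2 : β * ((2*m)/(16*β)) = m/8 := by field_simp; ring
  nlinarith [mul_le_mul_of_nonneg_left h1 hβ.le]

private lemma aux_rho : 17 * Real.exp (-(1/8:ℝ)) ≤ 16 := by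
  have h := Real.add_one_le_exp (1/8 : ℝ)
  have hp := Real.exp_pos (1/8 : ℝ)
  rw [Real.exp_neg, ← div_eq_mul_inv, div_le_iff₀ hp]
  linarith

set_option maxHeartbeats 2000000 in
/-- If `ω̂(r) ≤ C ((1-r)/(1-t))^β ω̂(t)` for `0 ≤ r ≤ t < 1`, then the moments
`ω_n = ∫_0^1 r^n ω(r) dr` satisfy `ω_n ≤ C' ω_{2n}`. -/
theorem stmt_1 (ω : ℝ → ℝ)
    (hnn : ∀ r ∈ Set.Ico (0:ℝ) 1, 0 ≤ ω r)
    (hint : MeasureTheory.IntegrableOn ω (Set.Ioc (0:ℝ) 1))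
    (hpos : ∀ r ∈ Set.Ico (0:ℝ) 1, 0 < ∫ s in Set.Ioc r 1, ω s)
    (h : ∃ C > (0:ℝ), ∃ β > (0:ℝ), ∀ r t : ℝ, 0 ≤ r → r ≤ t → t < 1 →
      (∫ s in Set.Ioc r 1, ω s) ≤
        C * ((1 - r) / (1 - t)) ^ β * ∫ s in Set.Ioc t 1, ω s) :
    ∃ C' > (0:ℝ), ∀ n : ℕ,
      (∫ r in Set.Ioc (0:ℝ) 1, r ^ n * ω r) ≤
        C' * ∫ r in Set.Ioc (0:ℝ) 1, r ^ (2 * n) * ω r := by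
  obtain ⟨C, hC, β, hβ, hdbl⟩ := h
  set ρ : ℝ := Real.exp (-(1/8)) with hρdef
  clear_value ρ
  have hρpos : 0 < ρ := hρdef ▸ Real.exp_pos _
  have hρ16 : 17 * ρ ≤ 16 := hρdef ▸ aux_rho
  set D : ℝ := C * (16*β) ^ β with hDdef
  clear_value D
  have hD : 0 < D := hDdef ▸ mul_pos hC (Real.rpow_pos_of_pos (by linarith) _)
  refine ⟨4 * (1 + 16 * D), by linarith, ?_⟩
  -- integrability of the integrands
  have hInt : ∀ m : ℕ, IntegrableOn (fun r => r ^ m * ω r) (Ioc (0:ℝ) 1) := by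
    intro m
    apply Integrable.bdd_mul (c := 1) hint
      (Continuous.aestronglyMeasurable (by continuity))
    refine (ae_restrict_iff' measurableSet_Ioc).2 (Filter.Eventually.of_forall ?_)
    intro x hx
    rw [Real.norm_eq_abs, abs_pow, abs_of_pos hx.1]
    exact pow_le_one₀ hx.1.le hx.2
  have hIntSub : ∀ (m : ℕ) (s : Set ℝ), s ⊆ Ioc (0:ℝ) 1 →
      IntegrableOn (fun r => r ^ m * ω r) s := fun m s hs => (hInt m).mono_set hs
  have hωSub : ∀ (s : Set ℝ), s ⊆ Ioc (0:ℝ) 1 → IntegrableOn ω s :=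
    fun s hs => hint.mono_set hs
  -- splitting of integrals
  have hsplit : ∀ (f : ℝ → ℝ), IntegrableOn f (Ioc (0:ℝ) 1) →
      ∀ a b : ℝ, 0 ≤ a → a ≤ b → b ≤ 1 →
      (∫ r in Ioc a 1, f r) = (∫ r in Ioc a b, f r) + ∫ r in Ioc b 1, f r := by
    intro f hf a b ha hab hb
    rw [← Ioc_union_Ioc_eq_Ioc hab hb,
      setIntegral_union (Ioc_disjoint_Ioc_of_le le_rfl) measurableSet_Ioc
        (hf.mono_set (Ioc_subset_Ioc ha hb))
        (hf.mono_set (Ioc_subset_Ioc (ha.trans hab) le_rfl))]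
  -- nonnegativity of integrals over subintervals
  have hnnI : ∀ (f : ℝ → ℝ), (∀ r ∈ Ico (0:ℝ) 1, 0 ≤ f r) →
      ∀ a b : ℝ, 0 ≤ a → b ≤ 1 → 0 ≤ ∫ r in Ioc a b, f r := by
    intro f hf a b ha hb
    rw [integral_Ioc_eq_integral_Ioo]
    apply setIntegral_nonneg measurableSet_Ioo
    intro r hr
    exact hf r ⟨ha.trans hr.1.le, hr.2.trans_le hb⟩
  set ψ : ℝ → ℝ := fun t => ∫ s in Ioc t 1, ω s with hψdef
  clear_value ψ
  have hψnn : ∀ a : ℝ, 0 ≤ a → 0 ≤ ψ a := by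
    intro a ha
    rw [hψdef]
    exact hnnI ω hnn a 1 ha le_rfl
  have hψeq : ∀ x, ψ x = ∫ s in Ioc x 1, ω s := fun x => congrFun hψdef x
  have hψmono : ∀ a b : ℝ, 0 ≤ a → a ≤ b → b ≤ 1 → ψ b ≤ ψ a := by
    intro a b ha hab hb
    have hs := hsplit ω hint a b ha hab hb
    have h0 := hnnI ω hnn a b ha hb
    simp only [hψdef] at *
    linarith
  -- upper bound for integral over a piece
  have hpieceUB : ∀ (m : ℕ) (a b : ℝ), 0 ≤ a → a ≤ b → b ≤ 1 →
      (∫ r in Ioc a b, r ^ m * ω r) ≤ b ^ m * ∫ r in Ioc a b, ω r := by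
    intro m a b ha hab hb
    rw [integral_Ioc_eq_integral_Ioo, integral_Ioc_eq_integral_Ioo,
      ← integral_const_mul]
    have hsub : Ioo a b ⊆ Ioc (0:ℝ) 1 :=
      (Ioo_subset_Ioc_self).trans (Ioc_subset_Ioc ha hb)
    apply setIntegral_mono_on ((hIntSub m _ hsub))
      ((hωSub _ hsub).const_mul _) measurableSet_Ioo
    intro r hr
    have hr0 : 0 ≤ r := ha.trans hr.1.le
    have hω0 : 0 ≤ ω r := hnn r ⟨hr0, hr.2.trans_le hb⟩
    exact mul_le_mul_of_nonneg_right (pow_le_pow_left₀ hr0 hr.2.le m) hω0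
  -- lower bound for the tail integral
  have hlowUB : ∀ (m : ℕ) (a : ℝ), 0 ≤ a → a ≤ 1 →
      a ^ m * (∫ r in Ioc a 1, ω r) ≤ ∫ r in Ioc a 1, r ^ m * ω r := by
    intro m a ha ha1
    rw [integral_Ioc_eq_integral_Ioo, integral_Ioc_eq_integral_Ioo,
      ← integral_const_mul]
    have hsub : Ioo a 1 ⊆ Ioc (0:ℝ) 1 :=
      (Ioo_subset_Ioc_self).trans (Ioc_subset_Ioc ha le_rfl)
    apply setIntegral_mono_on ((hωSub _ hsub).const_mul _)
      ((hIntSub m _ hsub)) measurableSet_Ioo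
    intro r hr
    have hω0 : 0 ≤ ω r := hnn r ⟨ha.trans hr.1.le, hr.2⟩
    exact mul_le_mul_of_nonneg_right (pow_le_pow_left₀ ha hr.1.le m) hω0
  intro n
  rcases Nat.eq_zero_or_pos n with hn0 | hn
  · subst hn0
    have h0 : 0 ≤ ∫ r in Ioc (0:ℝ) 1, r ^ 0 * ω r := by
      apply hnnI _ _ 0 1 le_rfl le_rfl
      intro r hr
      exact mul_nonneg (pow_nonneg hr.1 0) (hnn r hr)
    have : (1:ℝ) ≤ 4 * (1 + 16 * D) := by nlinarith
    simpa using le_mul_of_one_le_left h0 this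
  -- now n ≥ 1
  have hN : (1:ℝ) ≤ (n:ℝ) := by exact_mod_cast hn
  set N : ℝ := (n:ℝ) with hNdef
  clear_value N
  have hNpos : 0 < N := by linarith
  set t : ℝ := 1 - 1/(2*N) with htdef
  clear_value t
  have h2N : (2:ℝ) ≤ 2*N := by linarith
  have h2Npos : (0:ℝ) < 2*N := by linarith
  have hinv : 1/(2*N) ≤ 1/2 := one_div_le_one_div_of_le (by norm_num) h2N
  have hinvpos : 0 < 1/(2*N) := by positivity
  have ht0 : 0 ≤ t := by rw [htdef]; linarith
  have ht1 : t < 1 := by rw [htdef]; linarith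
  have hψt := hψnn t ht0
  set K : ℕ := Nat.clog 2 (2*n) with hKdef
  clear_value K
  have hK1 : 2*n ≤ 2^K := hKdef ▸ Nat.le_pow_clog (by norm_num) _
  have hK2 : 2^(K-1) < 2*n := hKdef ▸ Nat.pow_pred_clog_lt_self (by norm_num) (by omega)
  have hKpos : 1 ≤ K := by
    rcases Nat.eq_zero_or_pos K with h0 | h0
    · rw [h0] at hK1; simp at hK1; omega
    · exact h0
  set a : ℕ → ℝ := fun k => 1 - (1/2:ℝ)^k with hadef
  clear_value a
  have ha0 : ∀ k, 0 ≤ a k := by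
    intro k
    have : (1/2:ℝ)^k ≤ 1 := pow_le_one₀ (by norm_num) (by norm_num)
    simp only [hadef]; linarith
  have ha1 : ∀ k, a k ≤ 1 := by
    intro k
    have : (0:ℝ) ≤ (1/2:ℝ)^k := by positivity
    simp only [hadef]; linarith
  have hamono : ∀ k, a k ≤ a (k+1) := by
    intro k
    have : (1/2:ℝ)^(k+1) ≤ (1/2:ℝ)^k := by
      rw [pow_succ]
      nlinarith [pow_nonneg (by norm_num : (0:ℝ) ≤ 1/2) k]
    simp only [hadef]; linarith
  have hat : ∀ k, k < K → a k ≤ t := by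
    intro k hk
    have hkK : 2^k ≤ 2^(K-1) := Nat.pow_le_pow_right (by norm_num) (by omega)
    have h2k : ((2:ℝ))^k < 2*N := by
      have : ((2^k : ℕ) : ℝ) < ((2*n : ℕ) : ℝ) := by exact_mod_cast lt_of_le_of_lt hkK hK2
      push_cast at this
      simpa [hNdef] using this
    have hp : (0:ℝ) < (2:ℝ)^k := by positivity
    have : 1/(2*N) < (1/2:ℝ)^k := by
      rw [one_div_pow]  -- (1/2)^k = 1/2^k
      exact one_div_lt_one_div_of_lt hp h2k
    simp only [hadef, htdef]; linarith
  have haK : t ≤ a K := by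
    have h2K : 2*N ≤ ((2:ℝ))^K := by
      have : ((2*n : ℕ) : ℝ) ≤ ((2^K : ℕ) : ℝ) := by exact_mod_cast hK1
      push_cast at this
      simpa [hNdef] using this
    have : (1/2:ℝ)^K ≤ 1/(2*N) := by
      rw [one_div_pow]
      exact one_div_le_one_div_of_le h2Npos h2K
    simp only [hadef, htdef]; linarith
  -- main induction
  have main : ∀ j : ℕ, j ≤ K →
      (∫ r in Ioc (a (K - j)) 1, r ^ n * ω r) ≤ (1 + 16 * D * (1 - ρ ^ j)) * ψ t := by
    intro j
    induction j with
    | zero =>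
      intro _
      simp only [Nat.sub_zero, pow_zero, sub_self, mul_zero, add_zero, one_mul]
      have h1 : (∫ r in Ioc (a K) 1, r ^ n * ω r) ≤ (1:ℝ)^n * ∫ r in Ioc (a K) 1, ω r :=
        hpieceUB n (a K) 1 (ha0 K) (ha1 K) le_rfl
      have h2 : ψ (a K) ≤ ψ t := hψmono t (a K) ht0 haK (ha1 K)
      simp only [one_pow, one_mul] at h1
      calc (∫ r in Ioc (a K) 1, r ^ n * ω r) ≤ ψ (a K) := by rw [hψeq]; exact h1
        _ ≤ ψ t := h2
    | succ j ih =>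
      intro hj1
      set k : ℕ := K - (j + 1) with hkdef
      clear_value k
      have hkK : k < K := by omega
      have hKj : K - j = k + 1 := by omega
      have ihb := ih (by omega)
      rw [hKj] at ihb
      -- split
      have hsp := hsplit (fun r => r ^ n * ω r) (hInt n) (a k) (a (k+1)) (ha0 k)
        (hamono k) (ha1 (k+1))
      -- the geometric quantity
      set m : ℝ := N * (1/2:ℝ)^k with hmdef
      clear_value m
      have hmpos : 0 < m := by rw [hmdef]; positivity
      -- piece bound
      have hp1 : (∫ r in Ioc (a k) (a (k+1)), r ^ n * ω r) ≤ (a (k+1))^n * ψ (a k) := by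
        have h1 := hpieceUB n (a k) (a (k+1)) (ha0 k) (hamono k) (ha1 (k+1))
        have h2 : (∫ r in Ioc (a k) (a (k+1)), ω r) ≤ ψ (a k) := by
          have hs := hsplit ω hint (a k) (a (k+1)) (ha0 k) (hamono k) (ha1 (k+1))
          have h0 := hψnn (a (k+1)) (ha0 (k+1))
          simp only [hψdef] at *
          linarith
        calc (∫ r in Ioc (a k) (a (k+1)), r ^ n * ω r)
            ≤ (a (k+1))^n * ∫ r in Ioc (a k) (a (k+1)), ω r := h1
          _ ≤ (a (k+1))^n * ψ (a k) :=
              mul_le_mul_of_nonneg_left h2 (pow_nonneg (ha0 (k+1)) n)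
      have hexp : (a (k+1))^n ≤ Real.exp (-(m/2)) := by
        have hx : a (k+1) ≤ Real.exp (-((1/2:ℝ)^(k+1))) := by
          have := Real.add_one_le_exp (-((1/2:ℝ)^(k+1)))
          simp only [hadef]; linarith
        have := pow_le_pow_left₀ (ha0 (k+1)) hx n
        rw [← Real.exp_nat_mul] at this
        have harg : (n:ℝ) * (-((1/2:ℝ)^(k+1))) = -(m/2) := by
          rw [hmdef, pow_succ, ← hNdef]; ring
        rwa [harg] at this
      have hdb : ψ (a k) ≤ C * (2*m) ^ β * ψ t := by
        have hd := hdbl (a k) t (ha0 k) (hat k hkK) ht1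
        have h1 : 1 - a k = (1/2:ℝ)^k := by simp only [hadef]; ring
        have h2 : 1 - t = 1/(2*N) := by simp only [htdef]; ring
        have hrat : (1 - a k)/(1 - t) = 2*m := by
          rw [h1, h2, div_div_eq_mul_div, hmdef]; ring
        rw [hrat] at hd
        rw [hψeq (a k), hψeq t]
        exact hd
      have hψak : 0 ≤ ψ (a k) := hψnn (a k) (ha0 k)
      have hchain : (∫ r in Ioc (a k) (a (k+1)), r ^ n * ω r)
          ≤ D * ρ^(j+1) * ψ t := by
        have hrpos : (0:ℝ) ≤ C * (2*m) ^ β * ψ t := by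
          have := Real.rpow_nonneg (by linarith : (0:ℝ) ≤ 2*m) β
          positivity
        have step1 : (a (k+1))^n * ψ (a k) ≤ Real.exp (-(m/2)) * (C * (2*m) ^ β * ψ t) :=
          mul_le_mul hexp hdb hψak (Real.exp_pos _).le
        have step2 : Real.exp (-(m/2)) * (C * (2*m) ^ β * ψ t)
            ≤ C * ((16*β) ^ β * Real.exp (-(m/4))) * ψ t := by
          have haux := aux_exp_rpow hβ hmpos
          have := mul_le_mul_of_nonneg_right
            (mul_le_mul_of_nonneg_left haux hC.le) hψt
          calc Real.exp (-(m/2)) * (C * (2*m) ^ β * ψ t)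
              = C * (Real.exp (-(m/2)) * (2*m) ^ β) * ψ t := by ring
            _ ≤ C * ((16*β) ^ β * Real.exp (-(m/4))) * ψ t := this
        have hdecay : Real.exp (-(m/4)) ≤ ρ^(j+1) := by
          rw [hρdef, ← Real.exp_nat_mul]
          apply Real.exp_le_exp.2
          -- need -(m/4) ≤ (j+1) * (-(1/8)) i.e. (j+1) ≤ 2*m
          have hjk : j + k = K - 1 := by omega
          have h2k : ((2:ℝ))^(K-1) < 2*N := by
            have : ((2^(K-1) : ℕ) : ℝ) < ((2*n : ℕ) : ℝ) := by exact_mod_cast hK2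
            push_cast at this
            simpa [hNdef] using this
          have hsplitpow : ((2:ℝ))^(K-1) = 2^j * 2^k := by
            rw [← pow_add, hjk]
          have hcancel : ((2:ℝ))^k * (1/2:ℝ)^k = 1 := by
            rw [← mul_pow]; norm_num
          have h2j : ((j:ℝ)+1) ≤ (2:ℝ)^j := by
            have := Nat.lt_two_pow_self (n := j)
            exact_mod_cast Nat.succ_le_of_lt this
          have hm2 : (2:ℝ)^j < 2*m := by
            have hpk : (0:ℝ) < (1/2:ℝ)^k := by positivity
            have h' : (2:ℝ)^j * 2^k < 2*N := by rw [← hsplitpow]; exact h2k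
            have h'' := mul_lt_mul_of_pos_right h' hpk
            rw [mul_assoc, hcancel, mul_one] at h''
            rw [hmdef]
            linarith [h'']
          push_cast
          linarith [hm2, h2j]
        have step3 : C * ((16*β) ^ β * Real.exp (-(m/4))) * ψ t ≤ D * ρ^(j+1) * ψ t := by
          rw [hDdef]
          have h16β : (0:ℝ) ≤ (16*β) ^ β := Real.rpow_nonneg (by linarith) β
          have := mul_le_mul_of_nonneg_left hdecay h16β
          nlinarith [mul_le_mul_of_nonneg_right (mul_le_mul_of_nonneg_left this hC.le) hψt]
        linarith [hp1, step1, step2, step3]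
      -- combine
      have hcoef : D * ρ^(j+1) + (1 + 16*D*(1 - ρ^j)) ≤ 1 + 16*D*(1 - ρ^(j+1)) := by
        have hρj : (0:ℝ) ≤ ρ^j := pow_nonneg hρpos.le j
        have h17 : 17 * ρ^(j+1) ≤ 16 * ρ^j := by
          have := mul_le_mul_of_nonneg_right hρ16 hρj
          calc 17 * ρ^(j+1) = 17 * ρ * ρ^j := by rw [pow_succ]; ring
            _ ≤ 16 * ρ^j := this
        nlinarith [hD.le]
      have := mul_le_mul_of_nonneg_right hcoef hψt
      calc (∫ r in Ioc (a k) 1, r ^ n * ω r)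
          = (∫ r in Ioc (a k) (a (k+1)), r ^ n * ω r)
            + ∫ r in Ioc (a (k+1)) 1, r ^ n * ω r := hsp
        _ ≤ D * ρ^(j+1) * ψ t + (1 + 16*D*(1 - ρ^j)) * ψ t := add_le_add hchain ihb
        _ = (D * ρ^(j+1) + (1 + 16*D*(1 - ρ^j))) * ψ t := by ring
        _ ≤ (1 + 16*D*(1 - ρ^(j+1))) * ψ t := this
  -- conclude
  have hmainK := main K le_rfl
  have ha00 : a (K - K) = 0 := by
    simp only [Nat.sub_self, hadef, pow_zero]; ring
  rw [ha00] at hmainK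
  have hb1 : (1 + 16 * D * (1 - ρ ^ K)) * ψ t ≤ (1 + 16 * D) * ψ t := by
    apply mul_le_mul_of_nonneg_right _ hψt
    nlinarith [pow_nonneg hρpos.le K, hD.le]
  -- lower bound for ω_{2n}
  have htn : (1:ℝ)/2 ≤ t^n := by
    have hma : (-2:ℝ) ≤ -(1/(2*N)) := by linarith
    have := one_add_mul_le_pow hma n
    have harg : (1 + -(1/(2*N))) = t := by rw [htdef]; ring
    rw [harg] at this
    have hnN : (n:ℝ) * (1/(2*N)) = 1/2 := by
      rw [← hNdef]; field_simp
    nlinarith [this]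
  have ht2n : (1:ℝ)/4 ≤ t^(2*n) := by
    have h1 : t^(2*n) = (t^n)^2 := by rw [← pow_mul, mul_comm]
    nlinarith [htn]
  have hlow := hlowUB (2*n) t ht0 ht1.le
  have hsplit2 := hsplit (fun r => r ^ (2*n) * ω r) (hInt (2*n)) 0 t le_rfl ht0 ht1.le
  have hnn2 : 0 ≤ ∫ r in Ioc (0:ℝ) t, r ^ (2*n) * ω r := by
    apply hnnI _ _ 0 t le_rfl ht1.le
    intro r hr
    exact mul_nonneg (pow_nonneg hr.1 _) (hnn r hr)
  have hω2n : t^(2*n) * ψ t ≤ ∫ r in Ioc (0:ℝ) 1, r ^ (2*n) * ω r := by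
    simp only [hψdef]
    rw [hsplit2]
    linarith [hlow]
  have hψ4 : ψ t ≤ 4 * ∫ r in Ioc (0:ℝ) 1, r ^ (2*n) * ω r := by
    nlinarith [hω2n, ht2n, hψt]
  calc (∫ r in Ioc (0:ℝ) 1, r ^ n * ω r)
      ≤ (1 + 16 * D * (1 - ρ ^ K)) * ψ t := hmainK
    _ ≤ (1 + 16 * D) * ψ t := hb1
    _ ≤ (1 + 16 * D) * (4 * ∫ r in Ioc (0:ℝ) 1, r ^ (2*n) * ω r) := by
        apply mul_le_mul_of_nonneg_left hψ4 (by nlinarith [hD.le])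
    _ = 4 * (1 + 16 * D) * ∫ r in Ioc (0:ℝ) 1, r ^ (2*n) * ω r := by ring
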